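/- Let {X_{n,t} : t = 1, …, d_n}, n ∈ ℕ, with d_n → ∞, be a triangular array of real random variables that is row-wise SP(1) with the same period T, i.e., X_{n,t} and X_{n,t+T} have the same distribution whenever both indices lie in {1, …, d_n}. Assume: (i) for each t = 1, …, T, the sequence {X_{n,t}}_n (defined for all n large enough that t ≤ d_n) is uniformly integrable; (ii) for each t = 1, …, T, the limit μ_t = lim_{n→∞} E X_{n,t} exists and is finite; (iii) there exists a triangular array of nonnegative real numbers {a_{n,τ} : τ = 0, …, d_n − 1} with d_n^{−1} Σ_{τ=0}^{d_n−1} a_{n,τ} → 0 as n → ∞, such that for every A > 0, every n, and all indices 1 ≤ t ≤ t + τ ≤ d_n, |Cov(g(X_{n,t}), h(X_{n,t+τ}))| ≤ A² a_{n,τ} for all Borel measurable g, h : ℝ → ℝ with |g| ≤ A and |h| ≤ A (in particular for the truncated variables X 1_{|X| < A}). Then d_n^{−1} Σ_{t=1}^{d_n} X_{n,t} → μ in probability, where μ = T^{−1} Σ_{t=1}^T μ_t. -/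

import Mathlib

open MeasureTheory Filter Topology

noncomputable section

variable {Ω : Type*} [MeasurableSpace Ω]

/-- Covariance of two real random variables. -/
def cov (P : Measure Ω) (f g : Ω → ℝ) : ℝ :=
  (∫ ω, f ω * g ω ∂P) - (∫ ω, f ω ∂P) * (∫ ω, g ω ∂P)

open Finset

lemma mod_aux (T k x : ℕ) (hx : x < T) : (k * T + x) % T = x := by
  rw [Nat.add_comm, Nat.add_mul_mod_self_right, Nat.mod_eq_of_lt hx]

lemma sum_range_mul_mod (v : ℕ → ℝ) (T : ℕ) (q : ℕ) :
    ∑ i ∈ range (q * T), v (i % T) = q * ∑ j ∈ range T, v j := by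
  induction q with
  | zero => simp
  | succ q ih =>
      rw [Nat.succ_mul, Finset.sum_range_add, ih]
      have h : ∀ i ∈ range T, v ((q * T + i) % T) = v i := fun i hi => by
        rw [mod_aux T q i (Finset.mem_range.mp hi)]
      rw [Finset.sum_congr rfl h]
      push_cast
      ring

lemma cesaro_periodic (v : ℕ → ℝ) (T : ℕ) (hT : 0 < T) :
    Tendsto (fun N : ℕ => (N : ℝ)⁻¹ * ∑ i ∈ range N, v (i % T)) atTop
      (𝓝 ((T : ℝ)⁻¹ * ∑ j ∈ range T, v j)) := by
  set V := ∑ j ∈ range T, v j with hV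
  set W := ∑ j ∈ range T, |v j| with hW
  have hT0 : (0:ℝ) < (T:ℝ) := by exact_mod_cast hT
  have key : ∀ N : ℕ, 0 < N →
      |(N : ℝ)⁻¹ * ∑ i ∈ range N, v (i % T) - (T : ℝ)⁻¹ * V|
        ≤ (|V| + W) / N := by
    intro N hN
    have hdecomp : (N / T) * T + N % T = N := Nat.div_add_mod' N T
    have hqT : ((N / T : ℕ) : ℝ) * (T : ℝ) + ((N % T : ℕ) : ℝ) = (N : ℝ) := by
      exact_mod_cast hdecomp
    have hsT : ((N % T : ℕ) : ℝ) ≤ (T:ℝ) := by exact_mod_cast (Nat.mod_lt N hT).le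
    have hsum : ∑ i ∈ range N, v (i % T)
        = ((N / T : ℕ) : ℝ) * V + ∑ i ∈ range (N % T), v i := by
      conv_lhs => rw [← hdecomp]
      rw [Finset.sum_range_add, sum_range_mul_mod]
      congr 1
      apply Finset.sum_congr rfl
      intro i hi
      rw [mod_aux T (N/T) i ((Finset.mem_range.mp hi).trans (Nat.mod_lt N hT))]
    set q : ℝ := ((N / T : ℕ) : ℝ) with hq
    set s : ℝ := ((N % T : ℕ) : ℝ) with hs
    set R : ℝ := ∑ i ∈ range (N % T), v i with hRdef
    have hs0 : (0:ℝ) ≤ s := Nat.cast_nonneg _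
    have hN0 : (0:ℝ) < N := by exact_mod_cast hN
    have hR : |R| ≤ W := by
      refine (Finset.abs_sum_le_sum_abs _ _).trans ?_
      exact Finset.sum_le_sum_of_subset_of_nonneg
        (Finset.range_subset_range.mpr (Nat.mod_lt N hT).le) (fun _ _ _ => abs_nonneg _)
    rw [hsum]
    have expand : (N:ℝ)⁻¹ * (q * V + R) - (T:ℝ)⁻¹ * V
        = (-(V * s)) / ((N:ℝ) * T) + R / N := by
      have hpos : (0:ℝ) < q * (T:ℝ) + s := by rw [hqT]; exact hN0
      rw [← hqT]
      field_simp
      ring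
    rw [expand]
    have h1 : |(-(V * s)) / ((N:ℝ) * T)| ≤ |V| / N := by
      calc |(-(V * s)) / ((N:ℝ) * T)| = |V| * s / ((N:ℝ) * T) := by
            rw [abs_div, abs_neg, abs_mul, abs_of_nonneg hs0,
              abs_of_pos (mul_pos hN0 hT0)]
          _ ≤ |V| * (T:ℝ) / ((N:ℝ) * T) := by gcongr
          _ = |V| / N := by rw [mul_comm (N:ℝ) (T:ℝ), mul_comm (|V|) (T:ℝ),
              mul_div_mul_left _ _ hT0.ne']
    have h2 : |R / (N:ℝ)| ≤ W / N := by
      rw [abs_div, abs_of_pos hN0]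
      gcongr
    calc |(-(V * s)) / ((N:ℝ) * T) + R / N| ≤ _ := abs_add_le _ _
      _ ≤ |V| / N + W / N := add_le_add h1 h2
      _ = (|V| + W) / N := (add_div _ _ _).symm
  have h0 := tendsto_const_div_atTop_nhds_zero_nat (|V| + W)
  have hsub : Tendsto (fun N : ℕ =>
      (N : ℝ)⁻¹ * ∑ i ∈ range N, v (i % T) - (T : ℝ)⁻¹ * V) atTop (𝓝 0) := by
    apply squeeze_zero_norm' _ h0
    filter_upwards [eventually_ge_atTop 1] with N hN
    exact key N hN
  have := hsub.add (tendsto_const_nhds (x := (T:ℝ)⁻¹ * V) (f := atTop))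
  simpa using this

noncomputable def trunc (A x : ℝ) : ℝ := if |x| < A then x else 0

lemma measurable_trunc (A : ℝ) : Measurable (trunc A) :=
  Measurable.ite (measurableSet_lt measurable_abs measurable_const)
    measurable_id measurable_const

lemma abs_trunc_le (A x : ℝ) (hA : 0 ≤ A) : |trunc A x| ≤ A := by
  unfold trunc; split
  · exact le_of_lt (by assumption)
  · simpa

lemma abs_sub_trunc (A x : ℝ) : |x - trunc A x| = if A ≤ |x| then |x| else 0 := by
  unfold trunc
  rcases lt_or_ge |x| A with h | h
  · simp [h, not_le.mpr h]
  · simp [not_lt.mpr h, h]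

lemma integrable_of_bdd {P : Measure Ω} [IsProbabilityMeasure P] {f : Ω → ℝ} {C : ℝ}
    (hm : Measurable f) (hC : ∀ ω, |f ω| ≤ C) : Integrable f P :=
  Integrable.mono' (integrable_const C) hm.aestronglyMeasurable
    (Filter.Eventually.of_forall fun ω => by simpa using hC ω)

lemma cov_comm (P : Measure Ω) (f g : Ω → ℝ) : cov P f g = cov P g f := by
  unfold cov
  simp only [mul_comm]

lemma cov_sum_sum (P : Measure Ω) (f : ℕ → Ω → ℝ) (s : Finset ℕ)
    (hfi : ∀ t ∈ s, Integrable (f t) P)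
    (hffi : ∀ t ∈ s, ∀ u ∈ s, Integrable (fun ω => f t ω * f u ω) P) :
    cov P (fun ω => ∑ t ∈ s, f t ω) (fun ω => ∑ t ∈ s, f t ω)
      = ∑ t ∈ s, ∑ u ∈ s, cov P (f t) (f u) := by
  unfold cov
  have h1 : (∫ ω, (∑ t ∈ s, f t ω) * (∑ u ∈ s, f u ω) ∂P)
      = ∑ t ∈ s, ∑ u ∈ s, ∫ ω, f t ω * f u ω ∂P := by
    rw [show (fun ω => (∑ t ∈ s, f t ω) * (∑ u ∈ s, f u ω))
        = fun ω => ∑ t ∈ s, ∑ u ∈ s, f t ω * f u ω from funext fun ω => by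
          rw [Finset.sum_mul_sum]]
    rw [integral_finset_sum s fun t ht => integrable_finset_sum s fun u hu => hffi t ht u hu]
    exact Finset.sum_congr rfl fun t ht => integral_finset_sum s fun u hu => hffi t ht u hu
  have h2 : (∫ ω, (∑ t ∈ s, f t ω) ∂P) = ∑ t ∈ s, ∫ ω, f t ω ∂P :=
    integral_finset_sum s hfi
  rw [h1, h2, Finset.sum_mul_sum, ← Finset.sum_sub_distrib]
  exact Finset.sum_congr rfl fun t ht => by rw [← Finset.sum_sub_distrib]

lemma cov_smul (P : Measure Ω) (c : ℝ) (f g : Ω → ℝ) :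
    cov P (fun ω => c * f ω) (fun ω => c * g ω) = c^2 * cov P f g := by
  unfold cov
  rw [show (fun ω => (c * f ω) * (c * g ω)) = fun ω => c^2 * (f ω * g ω) from
    funext fun ω => by ring]
  rw [integral_const_mul, integral_const_mul, integral_const_mul]
  ring

lemma sum_dist_le (b : ℕ → ℝ) (hb : ∀ τ, 0 ≤ b τ) (N t : ℕ) (ht1 : 1 ≤ t) (htN : t ≤ N)
    (c : ℕ → ℝ) (hc : ∀ s, 1 ≤ s → s ≤ N → t ≤ s → c s ≤ b (s - t))
    (hc' : ∀ s, 1 ≤ s → s ≤ N → s ≤ t → c s ≤ b (t - s)) :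
    ∑ s ∈ Icc 1 N, c s ≤ 2 * ∑ τ ∈ range N, b τ := by
  have hsplit : ∑ s ∈ Ico 1 (t+1), c s + ∑ s ∈ Ico (t+1) (N+1), c s
      = ∑ s ∈ Icc 1 N, c s := by
    rw [← Finset.Ico_add_one_right_eq_Icc]
    exact Finset.sum_Ico_consecutive _ (by omega) (by omega)
  have h1 : ∑ s ∈ Ico 1 (t+1), c s ≤ ∑ τ ∈ range N, b τ := by
    calc ∑ s ∈ Ico 1 (t+1), c s ≤ ∑ s ∈ Ico 1 (t+1), b (t - s) := by
          apply Finset.sum_le_sum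
          intro s hs
          rw [Finset.mem_Ico] at hs
          exact hc' s hs.1 (by omega) (by omega)
      _ = ∑ i ∈ range t, b (t - (1 + i)) := by
          rw [Finset.sum_Ico_eq_sum_range]
          exact Finset.sum_congr (by rw [Nat.add_sub_cancel]) (fun _ _ => rfl)
      _ = ∑ i ∈ range t, b (t - 1 - i) := by
          apply Finset.sum_congr rfl; intro i _; congr 1; omega
      _ = ∑ j ∈ range t, b j := Finset.sum_range_reflect b t
      _ ≤ ∑ τ ∈ range N, b τ :=
          Finset.sum_le_sum_of_subset_of_nonneg
            (Finset.range_subset_range.mpr htN) (fun _ _ _ => hb _)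
  have h2 : ∑ s ∈ Ico (t+1) (N+1), c s ≤ ∑ τ ∈ range N, b τ := by
    calc ∑ s ∈ Ico (t+1) (N+1), c s ≤ ∑ s ∈ Ico (t+1) (N+1), b (s - t) := by
          apply Finset.sum_le_sum
          intro s hs
          rw [Finset.mem_Ico] at hs
          exact hc s (by omega) (by omega) (by omega)
      _ = ∑ i ∈ range (N + 1 - (t+1)), b (t + 1 + i - t) := by
          rw [Finset.sum_Ico_eq_sum_range]
      _ = ∑ i ∈ range (N - t), b (1 + i) := by
          apply Finset.sum_congr (by congr 1; omega)
          intro i _; congr 1; omega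
      _ = ∑ j ∈ Ico 1 (1 + (N - t)), b j := by
          rw [Finset.sum_Ico_eq_sum_range, Nat.add_sub_cancel_left]
      _ ≤ ∑ τ ∈ range N, b τ := by
          rw [Finset.range_eq_Ico]
          exact Finset.sum_le_sum_of_subset_of_nonneg
            (Finset.Ico_subset_Ico (by omega) (by omega)) (fun _ _ _ => hb _)
  linarith

lemma per_n (P : Measure Ω) [IsProbabilityMeasure P]
    (N : ℕ) (hN1 : 1 ≤ N)
    (Z : ℕ → Ω → ℝ) (hZm : ∀ t, Measurable (Z t))
    (hZint : ∀ t, 1 ≤ t → t ≤ N → Integrable (Z t) P)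
    (A : ℝ) (hA : 0 < A)
    (b : ℕ → ℝ) (hb0 : ∀ τ, 0 ≤ b τ)
    (hcov' : ∀ t τ, 1 ≤ t → t + τ ≤ N →
      |cov P (fun ω => trunc A (Z t ω)) (fun ω => trunc A (Z (t + τ) ω))| ≤ A ^ 2 * b τ)
    (η ε μ : ℝ) (hε : 0 < ε) (hη : 0 < η) (hηε : η ≤ ε / 4)
    (htrunc : ∀ t, 1 ≤ t → t ≤ N → ∫ ω, |Z t ω - trunc A (Z t ω)| ∂P ≤ η)
    (hmean : |(N : ℝ)⁻¹ * (∑ t ∈ Icc 1 N, ∫ ω, Z t ω ∂P) - μ| ≤ ε / 4) :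
    P {ω | ε ≤ |(N : ℝ)⁻¹ * (∑ t ∈ Icc 1 N, Z t ω) - μ|}
      ≤ ENNReal.ofReal (η / (ε / 4))
        + ENNReal.ofReal ((2 * A ^ 2 * ((N : ℝ)⁻¹ * ∑ τ ∈ range N, b τ)) / (ε / 4) ^ 2) := by
  have hN0 : (0:ℝ) < N := by exact_mod_cast hN1
  have hNinv : (0:ℝ) ≤ (N:ℝ)⁻¹ := by positivity
  have hcard : (Icc 1 N).card = N := by rw [Nat.card_Icc]; omega
  set Y : ℕ → Ω → ℝ := fun t ω => trunc A (Z t ω) with hYdef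
  have hYm : ∀ t, Measurable (Y t) := fun t => (measurable_trunc A).comp (hZm t)
  have hYb : ∀ t ω, |Y t ω| ≤ A := fun t ω => abs_trunc_le A _ hA.le
  have hYint : ∀ t, Integrable (Y t) P := fun t => integrable_of_bdd (hYm t) (hYb t)
  set S : Ω → ℝ := fun ω => (N:ℝ)⁻¹ * ∑ t ∈ Icc 1 N, Z t ω with hSdef
  set SY : Ω → ℝ := fun ω => (N:ℝ)⁻¹ * ∑ t ∈ Icc 1 N, Y t ω with hSYdef
  have hSm : Measurable S := (Finset.measurable_sum _ (fun t _ => hZm t)).const_mul _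
  have hSYm : Measurable SY := (Finset.measurable_sum _ (fun t _ => hYm t)).const_mul _
  have hSint : Integrable S P :=
    (integrable_finset_sum _ (fun t ht => hZint t (Finset.mem_Icc.mp ht).1
      (Finset.mem_Icc.mp ht).2)).const_mul _
  have hSYb : ∀ ω, |SY ω| ≤ A := by
    intro ω
    rw [hSYdef]
    simp only [abs_mul, abs_inv, Nat.abs_cast]
    calc ((N:ℝ))⁻¹ * |∑ t ∈ Icc 1 N, Y t ω| ≤ (N:ℝ)⁻¹ * ∑ t ∈ Icc 1 N, A := by
          gcongr
          exact (Finset.abs_sum_le_sum_abs _ _).trans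
            (Finset.sum_le_sum fun t _ => hYb t ω)
      _ = A := by rw [Finset.sum_const, hcard, nsmul_eq_mul]; field_simp
  have hSYint : Integrable SY P := integrable_of_bdd hSYm hSYb
  set mY : ℝ := ∫ ω, SY ω ∂P with hmYdef
  set m : ℝ := ∫ ω, S ω ∂P with hmdef
  -- truncation error in L¹
  have hdiffint : ∀ t, 1 ≤ t → t ≤ N → Integrable (fun ω => |Z t ω - Y t ω|) P :=
    fun t h1 h2 => ((hZint t h1 h2).sub (hYint t)).abs
  have hD : ∫ ω, |S ω - SY ω| ∂P ≤ η := by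
    have hptw : ∀ ω, |S ω - SY ω| ≤ (N:ℝ)⁻¹ * ∑ t ∈ Icc 1 N, |Z t ω - Y t ω| := by
      intro ω
      rw [hSdef, hSYdef]
      simp only
      rw [← mul_sub, ← Finset.sum_sub_distrib, abs_mul, abs_inv, Nat.abs_cast]
      gcongr
      exact Finset.abs_sum_le_sum_abs _ _
    calc ∫ ω, |S ω - SY ω| ∂P
        ≤ ∫ ω, (N:ℝ)⁻¹ * ∑ t ∈ Icc 1 N, |Z t ω - Y t ω| ∂P := by
          apply integral_mono (hSint.sub hSYint).abs
          · exact (integrable_finset_sum _ (fun t ht => hdiffint t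
              (Finset.mem_Icc.mp ht).1 (Finset.mem_Icc.mp ht).2)).const_mul _
          · exact hptw
      _ = (N:ℝ)⁻¹ * ∑ t ∈ Icc 1 N, ∫ ω, |Z t ω - Y t ω| ∂P := by
          rw [integral_const_mul]
          congr 1
          exact integral_finset_sum _ (fun t ht => hdiffint t
            (Finset.mem_Icc.mp ht).1 (Finset.mem_Icc.mp ht).2)
      _ ≤ (N:ℝ)⁻¹ * ∑ t ∈ Icc 1 N, η := by
          apply mul_le_mul_of_nonneg_left _ hNinv
          exact Finset.sum_le_sum fun t ht =>
            htrunc t (Finset.mem_Icc.mp ht).1 (Finset.mem_Icc.mp ht).2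
      _ = η := by rw [Finset.sum_const, hcard, nsmul_eq_mul]; field_simp
  -- difference of means
  have hmdiff : |mY - m| ≤ η := by
    have heq : mY - m = ∫ ω, (SY ω - S ω) ∂P := (integral_sub hSYint hSint).symm
    calc |mY - m| = |∫ ω, (SY ω - S ω) ∂P| := by rw [heq]
      _ ≤ ∫ ω, |SY ω - S ω| ∂P := by
          simpa [Real.norm_eq_abs] using
            norm_integral_le_integral_norm (fun ω => SY ω - S ω) (μ := P)
      _ = ∫ ω, |S ω - SY ω| ∂P := by
          congr 1; funext ω; rw [abs_sub_comm]
      _ ≤ η := hD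
  -- mean identity
  have hmeq : m = (N : ℝ)⁻¹ * ∑ t ∈ Icc 1 N, ∫ ω, Z t ω ∂P := by
    rw [hmdef, hSdef]
    simp only
    rw [integral_const_mul]
    congr 1
    exact integral_finset_sum _ (fun t ht => hZint t
      (Finset.mem_Icc.mp ht).1 (Finset.mem_Icc.mp ht).2)
  -- variance bound
  set v : ℝ := 2 * A ^ 2 * ((N : ℝ)⁻¹ * ∑ τ ∈ range N, b τ) with hvdef
  have hYYint : ∀ t u, Integrable (fun ω => Y t ω * Y u ω) P := fun t u =>
    integrable_of_bdd ((hYm t).mul (hYm u)) (C := A * A) (fun ω => by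
      rw [abs_mul]
      exact mul_le_mul (hYb t ω) (hYb u ω) (abs_nonneg _) hA.le)
  have hSY2int : Integrable (fun ω => SY ω * SY ω) P :=
    integrable_of_bdd (hSYm.mul hSYm) (C := A * A) (fun ω => by
      rw [abs_mul]
      exact mul_le_mul (hSYb ω) (hSYb ω) (abs_nonneg _) hA.le)
  have hvar : ∫ ω, (SY ω - mY) ^ 2 ∂P ≤ v := by
    have hexp : ∫ ω, (SY ω - mY) ^ 2 ∂P = cov P SY SY := by
      have hptw : (fun ω => (SY ω - mY) ^ 2)
          = fun ω => SY ω * SY ω - 2 * mY * SY ω + mY * mY := by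
        funext ω; ring
      have hint1 : Integrable (fun ω => SY ω * SY ω - 2 * mY * SY ω) P := by
        exact hSY2int.sub (hSYint.const_mul _)
      have hint2 : Integrable (fun ω => 2 * mY * SY ω) P := hSYint.const_mul _
      rw [hptw, integral_add hint1 (integrable_const _),
        integral_sub hSY2int hint2, integral_const_mul, integral_const]
      unfold cov
      simp [← hmYdef]
      ring
    have hcovsum : cov P SY SY = ((N:ℝ)⁻¹) ^ 2 *
        ∑ t ∈ Icc 1 N, ∑ u ∈ Icc 1 N, cov P (Y t) (Y u) := by
      rw [hSYdef]
      rw [cov_smul P ((N:ℝ)⁻¹) (fun ω => ∑ t ∈ Icc 1 N, Y t ω)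
        (fun ω => ∑ t ∈ Icc 1 N, Y t ω),
        cov_sum_sum P Y (Icc 1 N) (fun t _ => hYint t) (fun t _ u _ => hYYint t u)]
    have hrowbound : ∀ t ∈ Icc 1 N, ∑ u ∈ Icc 1 N, cov P (Y t) (Y u)
        ≤ 2 * ∑ τ ∈ range N, A ^ 2 * b τ := by
      intro t ht
      obtain ⟨ht1, htN⟩ := Finset.mem_Icc.mp ht
      apply sum_dist_le (fun τ => A ^ 2 * b τ) (fun τ => mul_nonneg (by positivity) (hb0 τ)) N t ht1 htN
      · intro u h1 h2 h3
        refine (le_abs_self _).trans ?_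
        have : t + (u - t) = u := by omega
        calc |cov P (Y t) (Y u)| = |cov P (Y t) (Y (t + (u - t)))| := by rw [this]
          _ ≤ A ^ 2 * b (u - t) := hcov' t (u - t) ht1 (by omega)
      · intro u h1 h2 h3
        refine (le_abs_self _).trans ?_
        rw [cov_comm]
        have : u + (t - u) = t := by omega
        calc |cov P (Y u) (Y t)| = |cov P (Y u) (Y (u + (t - u)))| := by rw [this]
          _ ≤ A ^ 2 * b (t - u) := hcov' u (t - u) h1 (by omega)
    calc ∫ ω, (SY ω - mY) ^ 2 ∂P
        = ((N:ℝ)⁻¹) ^ 2 * ∑ t ∈ Icc 1 N, ∑ u ∈ Icc 1 N, cov P (Y t) (Y u) := by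
          rw [hexp, hcovsum]
      _ ≤ ((N:ℝ)⁻¹) ^ 2 * ∑ t ∈ Icc 1 N, (2 * ∑ τ ∈ range N, A ^ 2 * b τ) := by
          apply mul_le_mul_of_nonneg_left _ (by positivity)
          exact Finset.sum_le_sum hrowbound
      _ = v := by
          rw [Finset.sum_const, hcard, nsmul_eq_mul, hvdef, ← Finset.mul_sum]
          field_simp
  have hε4 : (0:ℝ) < (ε/4)^2 := by positivity
  -- Chebyshev for the truncated average
  have hWint : Integrable (fun ω => (SY ω - mY)^2) P := by
    apply integrable_of_bdd (C := (A + |mY|)^2) ((hSYm.sub measurable_const).pow_const 2)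
    intro ω
    rw [abs_of_nonneg (sq_nonneg _), ← sq_abs]
    apply pow_le_pow_left₀ (abs_nonneg _) _ 2
    rw [sub_eq_add_neg]
    exact (abs_add_le _ _).trans (by rw [Pi.neg_apply, abs_neg]; exact add_le_add (hSYb ω) le_rfl)
  have hcheb : P {ω | ε/4 ≤ |SY ω - mY|} ≤ ENNReal.ofReal (v / (ε/4)^2) := by
    have markov := mul_meas_ge_le_integral_of_nonneg
      (Filter.Eventually.of_forall fun ω => sq_nonneg (SY ω - mY)) hWint ((ε/4)^2)
    have hseteq : {ω | ε/4 ≤ |SY ω - mY|} = {ω | (ε/4)^2 ≤ (SY ω - mY)^2} := by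
      ext ω
      simp only [Set.mem_setOf_eq]
      constructor
      · intro h
        calc (ε/4)^2 ≤ |SY ω - mY|^2 := pow_le_pow_left₀ (by positivity) h 2
          _ = (SY ω - mY)^2 := sq_abs _
      · intro h
        by_contra h'
        push_neg at h'
        nlinarith [abs_nonneg (SY ω - mY), sq_abs (SY ω - mY)]
    have h2 : (P {ω | (ε/4)^2 ≤ (SY ω - mY)^2}).toReal ≤ v / (ε/4)^2 := by
      rw [le_div_iff₀ hε4]
      rw [measureReal_def] at markov
      nlinarith [markov, hvar]
    rw [hseteq, ← ENNReal.ofReal_toReal (measure_ne_top P _)]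
    exact ENNReal.ofReal_le_ofReal h2
  -- Markov for the truncation error
  have hmark : P {ω | ε/4 ≤ |S ω - SY ω|} ≤ ENNReal.ofReal (η / (ε/4)) := by
    have markov := mul_meas_ge_le_integral_of_nonneg
      (Filter.Eventually.of_forall fun ω => abs_nonneg (S ω - SY ω))
      (hSint.sub hSYint).abs (ε/4)
    have h2 : (P {ω | ε/4 ≤ |S ω - SY ω|}).toReal ≤ η / (ε/4) := by
      rw [le_div_iff₀ (by positivity : (0:ℝ) < ε/4)]
      rw [measureReal_def] at markov
      nlinarith [markov, hD]
    rw [← ENNReal.ofReal_toReal (measure_ne_top P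
      {ω | ε/4 ≤ |S ω - SY ω|})]
    exact ENNReal.ofReal_le_ofReal h2
  -- inclusion of events
  have hincl : {ω | ε ≤ |S ω - μ|}
      ⊆ {ω | ε/4 ≤ |S ω - SY ω|} ∪ {ω | ε/4 ≤ |SY ω - mY|} := by
    intro ω hω
    simp only [Set.mem_setOf_eq] at hω
    by_contra hcon
    simp only [Set.mem_union, Set.mem_setOf_eq] at hcon
    push_neg at hcon
    obtain ⟨hc1, hc2⟩ := hcon
    have tri1 : |S ω - μ| ≤ |S ω - SY ω| + |SY ω - μ| := abs_sub_le _ _ _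
    have tri2 : |SY ω - μ| ≤ |SY ω - mY| + |mY - μ| := abs_sub_le _ _ _
    have tri3 : |mY - μ| ≤ |mY - m| + |m - μ| := abs_sub_le _ _ _
    have hm4 : |m - μ| ≤ ε/4 := by rw [hmeq]; exact hmean
    linarith
  calc P {ω | ε ≤ |S ω - μ|}
      ≤ P ({ω | ε/4 ≤ |S ω - SY ω|} ∪ {ω | ε/4 ≤ |SY ω - mY|}) := measure_mono hincl
    _ ≤ P {ω | ε/4 ≤ |S ω - SY ω|} + P {ω | ε/4 ≤ |SY ω - mY|} := measure_union_le _ _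
    _ ≤ ENNReal.ofReal (η / (ε/4)) + ENNReal.ofReal (v / (ε/4)^2) := add_le_add hmark hcheb

lemma integral_comp_eq {P : Measure Ω} {f g : Ω → ℝ}
    (hf : Measurable f) (hg : Measurable g)
    (h : Measure.map f P = Measure.map g P) (φ : ℝ → ℝ) (hφ : Measurable φ) :
    ∫ ω, φ (f ω) ∂P = ∫ ω, φ (g ω) ∂P := by
  rw [← integral_map hf.aemeasurable hφ.aestronglyMeasurable, h,
    integral_map hg.aemeasurable hφ.aestronglyMeasurable]

lemma map_chain {P : Measure Ω} {d : ℕ → ℕ} {X : ℕ → ℕ → Ω → ℝ} {T : ℕ}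
    (hSP1 : ∀ n t, 1 ≤ t → t + T ≤ d n →
      Measure.map (X n t) P = Measure.map (X n (t + T)) P)
    (n : ℕ) : ∀ k t, 1 ≤ t → t + k * T ≤ d n →
      Measure.map (X n t) P = Measure.map (X n (t + k * T)) P := by
  intro k
  induction k with
  | zero => intro t _ _; simp
  | succ k ih =>
      intro t ht1 ht2
      have hm : (k+1) * T = k * T + T := by ring
      have h1 : t + k * T ≤ d n := by omega
      have h2 := hSP1 n (t + k * T) (by omega) (by omega)
      rw [show t + k * T + T = t + (k+1) * T by rw [hm]; omega] at h2
      rw [ih t ht1 h1, h2]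

lemma map_reduce {P : Measure Ω} {d : ℕ → ℕ} {X : ℕ → ℕ → Ω → ℝ} {T : ℕ} (hT : 0 < T)
    (hSP1 : ∀ n t, 1 ≤ t → t + T ≤ d n →
      Measure.map (X n t) P = Measure.map (X n (t + T)) P)
    (n t : ℕ) (ht1 : 1 ≤ t) (ht2 : t ≤ d n) :
    Measure.map (X n t) P = Measure.map (X n ((t - 1) % T + 1)) P := by
  have hr : (t - 1) % T + 1 + ((t - 1) / T) * T = t := by
    have := Nat.mod_add_div' (t - 1) T
    omega
  have := map_chain hSP1 n ((t - 1) / T) ((t - 1) % T + 1) (by omega) (by rw [hr]; exact ht2)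
  rw [hr] at this
  exact this.symm


/-- **Lemma A.4**: weak law of large numbers for a row-wise `SP(1)` triangular array with
uniformly integrable columns, convergent column means, and a covariance bound for bounded
truncations with Cesàro-negligible constants. -/
theorem triangular_array_wlln
    (P : Measure Ω) [IsProbabilityMeasure P]
    (d : ℕ → ℕ) (hd : Tendsto d atTop atTop)
    (X : ℕ → ℕ → Ω → ℝ)
    (hXm : ∀ n t, Measurable (X n t))
    (hint : ∀ n t, 1 ≤ t → t ≤ d n → Integrable (X n t) P)
    (T : ℕ) (hT : 0 < T)
    (hSP1 : ∀ n t, 1 ≤ t → t + T ≤ d n →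
      Measure.map (X n t) P = Measure.map (X n (t + T)) P)
    (hUI : ∀ t, 1 ≤ t → t ≤ T → ∀ ε : ℝ, 0 < ε → ∃ A : ℝ,
      ∀ n, t ≤ d n → ∫ ω in {ω | A ≤ |X n t ω|}, |X n t ω| ∂P ≤ ε)
    (μt : ℕ → ℝ)
    (hμt : ∀ t, 1 ≤ t → t ≤ T →
      Tendsto (fun n => ∫ ω, X n t ω ∂P) atTop (𝓝 (μt t)))
    (a : ℕ → ℕ → ℝ) (ha0 : ∀ n τ, 0 ≤ a n τ)
    (haC : Tendsto (fun n => (d n : ℝ)⁻¹ * ∑ τ ∈ Finset.range (d n), a n τ) atTop (𝓝 0))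
    (hcov : ∀ A : ℝ, 0 < A → ∀ n t τ, 1 ≤ t → t + τ ≤ d n →
      ∀ g h : ℝ → ℝ, Measurable g → Measurable h →
        (∀ x, |g x| ≤ A) → (∀ x, |h x| ≤ A) →
        |cov P (fun ω => g (X n t ω)) (fun ω => h (X n (t + τ) ω))| ≤ A ^ 2 * a n τ) :
    ∀ ε : ℝ, 0 < ε →
      Tendsto
        (fun n => P {ω | ε ≤ |(d n : ℝ)⁻¹ * (∑ t ∈ Finset.Icc 1 (d n), X n t ω) -
          (T : ℝ)⁻¹ * ∑ t ∈ Finset.Icc 1 T, μt t|})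
        atTop (𝓝 0) := by
  intro ε hε
  set μbar : ℝ := (T : ℝ)⁻¹ * ∑ t ∈ Finset.Icc 1 T, μt t with hμbar
  -- Step 1: convergence of the averaged means
  have hmean_t : Tendsto (fun n => (d n : ℝ)⁻¹ * ∑ t ∈ Icc 1 (d n), ∫ ω, X n t ω ∂P)
      atTop (𝓝 μbar) := by
    set v : ℕ → ℝ := fun j => μt (j + 1) with hv
    have hlim : (T : ℝ)⁻¹ * ∑ j ∈ range T, v j = μbar := by
      rw [hμbar]
      congr 1
      rw [← Finset.Ico_add_one_right_eq_Icc, Finset.sum_Ico_eq_sum_range, Nat.add_sub_cancel]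
      exact Finset.sum_congr rfl fun i _ => by rw [hv]; simp [Nat.add_comm]
    have cesA : Tendsto (fun n => (d n : ℝ)⁻¹ * ∑ i ∈ range (d n), v (i % T))
        atTop (𝓝 μbar) := by
      rw [← hlim]
      exact (cesaro_periodic v T hT).comp hd
    set E : ℕ → ℝ := fun n => ∑ j ∈ range T, |(∫ ω, X n (j+1) ω ∂P) - μt (j+1)| with hE
    have hE0 : Tendsto E atTop (𝓝 0) := by
      have : Tendsto E atTop (𝓝 (∑ j ∈ range T, (0:ℝ))) := by
        apply tendsto_finset_sum
        intro j hj
        have hj' := Finset.mem_range.mp hj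
        have h1 := (hμt (j+1) (by omega) (by omega)).sub
          (tendsto_const_nhds (x := μt (j+1)) (f := atTop))
        rw [sub_self] at h1
        simpa using h1.abs
      simpa using this
    set D : ℕ → ℝ := fun n => (d n : ℝ)⁻¹ * ∑ t ∈ Icc 1 (d n), ∫ ω, X n t ω ∂P
      - (d n : ℝ)⁻¹ * ∑ i ∈ range (d n), v (i % T) with hD
    have hDle : ∀ n, |D n| ≤ E n := by
      intro n
      have hsum1 : ∑ t ∈ Icc 1 (d n), ∫ ω, X n t ω ∂P
          = ∑ i ∈ range (d n), ∫ ω, X n (1 + i) ω ∂P := by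
        rw [← Finset.Ico_add_one_right_eq_Icc, Finset.sum_Ico_eq_sum_range, Nat.add_sub_cancel]
      have hDeq : D n = (d n : ℝ)⁻¹ *
          ∑ i ∈ range (d n), ((∫ ω, X n (1 + i) ω ∂P) - v (i % T)) := by
        simp only [hD]
        rw [hsum1, ← mul_sub, ← Finset.sum_sub_distrib]
      have hterm : ∀ i ∈ range (d n),
          |(∫ ω, X n (1 + i) ω ∂P) - v (i % T)| ≤ E n := by
        intro i hi
        have hi' := Finset.mem_range.mp hi
        have hred : ∫ ω, X n (1 + i) ω ∂P = ∫ ω, X n (i % T + 1) ω ∂P := by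
          have hmap := map_reduce hT hSP1 n (1 + i) (by omega) (by omega)
          have : (1 + i - 1) % T + 1 = i % T + 1 := by
            rw [show 1 + i - 1 = i by omega]
          rw [this] at hmap
          exact integral_comp_eq (hXm n (1+i)) (hXm n (i % T + 1)) hmap
            (fun x => x) measurable_id
        rw [hred, hE]
        have hmem : i % T ∈ range T := Finset.mem_range.mpr (Nat.mod_lt i hT)
        have := Finset.single_le_sum
          (f := fun j => |(∫ ω, X n (j+1) ω ∂P) - μt (j+1)|)
          (fun j _ => abs_nonneg _) hmem
        simpa [hv] using this
      calc |D n| ≤ (d n : ℝ)⁻¹ *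
            ∑ i ∈ range (d n), |(∫ ω, X n (1 + i) ω ∂P) - v (i % T)| := by
            rw [hDeq, abs_mul, abs_inv, Nat.abs_cast]
            exact mul_le_mul_of_nonneg_left (Finset.abs_sum_le_sum_abs _ _)
              (by positivity)
        _ ≤ (d n : ℝ)⁻¹ * ∑ i ∈ range (d n), E n := by
            apply mul_le_mul_of_nonneg_left (Finset.sum_le_sum hterm) (by positivity)
        _ ≤ E n := by
            rw [Finset.sum_const, Finset.card_range, nsmul_eq_mul, ← mul_assoc]
            have hEnn : 0 ≤ E n := Finset.sum_nonneg fun j _ => abs_nonneg _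
            rcases Nat.eq_zero_or_pos (d n) with h | h
            · simp [h, hEnn]
            · have : ((d n : ℝ))⁻¹ * (d n : ℝ) = 1 := by
                field_simp
              rw [this, one_mul]
    have hDlim : Tendsto D atTop (𝓝 0) := squeeze_zero_norm hDle hE0
    have hfun : (fun n => (d n : ℝ)⁻¹ * ∑ t ∈ Icc 1 (d n), ∫ ω, X n t ω ∂P)
        = fun n => D n + (d n : ℝ)⁻¹ * ∑ i ∈ range (d n), v (i % T) := by
      funext n; rw [hD]; ring
    rw [hfun]
    simpa using hDlim.add cesA
  -- Step 2: ε-δ argument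
  rw [ENNReal.tendsto_atTop_zero]
  intro δ' hδ'
  rcases eq_or_ne δ' ⊤ with rfl | hδt
  · exact ⟨0, fun n _ => le_top⟩
  set δ : ℝ := δ'.toReal with hδdef
  have hδ : 0 < δ := ENNReal.toReal_pos hδ'.ne' hδt
  suffices hsuf : ∀ᶠ n in atTop,
      P {ω | ε ≤ |(d n : ℝ)⁻¹ * (∑ t ∈ Finset.Icc 1 (d n), X n t ω) - μbar|}
        ≤ ENNReal.ofReal δ by
    obtain ⟨Nn, hNn⟩ := eventually_atTop.mp hsuf
    exact ⟨Nn, fun n hn => (hNn n hn).trans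
      (by rw [hδdef, ENNReal.ofReal_toReal hδt])⟩
  set η : ℝ := min (ε / 12) (δ * ε / 8) with hηdef
  have hη : 0 < η := lt_min (by positivity) (by positivity)
  -- choose truncation level A
  have hUIa : ∀ r : ℕ, ∃ A : ℝ, 1 ≤ r → r ≤ T → ∀ n, r ≤ d n →
      ∫ ω in {ω | A ≤ |X n r ω|}, |X n r ω| ∂P ≤ η := by
    intro r
    by_cases h : 1 ≤ r ∧ r ≤ T
    · obtain ⟨A, hA⟩ := hUI r h.1 h.2 η hη
      exact ⟨A, fun _ _ => hA⟩
    · exact ⟨0, fun h1 h2 => absurd ⟨h1, h2⟩ h⟩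
  choose A0 hA0 using hUIa
  have hTne : (Icc 1 T).Nonempty := ⟨1, Finset.mem_Icc.mpr ⟨le_refl 1, hT⟩⟩
  set A : ℝ := max 1 ((Icc 1 T).sup' hTne A0) with hAdef
  have hA1 : (1:ℝ) ≤ A := le_max_left _ _
  have hA : (0:ℝ) < A := lt_of_lt_of_le one_pos hA1
  have hA0le : ∀ r ∈ Icc 1 T, A0 r ≤ A :=
    fun r hr => (Finset.le_sup' A0 hr).trans (le_max_right _ _)
  have hUIA : ∀ r, 1 ≤ r → r ≤ T → ∀ n, r ≤ d n →
      ∫ ω in {ω | A ≤ |X n r ω|}, |X n r ω| ∂P ≤ η := by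
    intro r h1 h2 n hrd
    refine le_trans (setIntegral_mono_set
      ((hint n r h1 hrd).abs.integrableOn) ?_ ?_) (hA0 r h1 h2 n hrd)
    · exact ae_of_all _ fun ω => abs_nonneg _
    · apply HasSubset.Subset.eventuallyLE
      intro ω hω
      exact le_trans (hA0le r (Finset.mem_Icc.mpr ⟨h1, h2⟩)) hω
  -- truncation error bound for all columns via SP(1)
  have htrunc : ∀ n t, 1 ≤ t → t ≤ d n → T ≤ d n →
      ∫ ω, |X n t ω - trunc A (X n t ω)| ∂P ≤ η := by
    intro n t h1 h2 hTd
    set r : ℕ := (t - 1) % T + 1 with hrdef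
    have hr1 : 1 ≤ r := by omega
    have hrT : r ≤ T := by
      have := Nat.mod_lt (t - 1) hT
      omega
    have hmap := map_reduce hT hSP1 n t h1 h2
    have hφm : Measurable (fun x : ℝ => |x - trunc A x|) :=
      (measurable_id.sub (measurable_trunc A)).abs
    calc ∫ ω, |X n t ω - trunc A (X n t ω)| ∂P
        = ∫ ω, |X n r ω - trunc A (X n r ω)| ∂P :=
          integral_comp_eq (hXm n t) (hXm n r) hmap _ hφm
      _ = ∫ ω in {ω | A ≤ |X n r ω|}, |X n r ω| ∂P := by
          rw [← integral_indicator (measurableSet_le measurable_const (hXm n r).abs)]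
          congr 1
          funext ω
          rw [abs_sub_trunc]
          by_cases hc : A ≤ |X n r ω|
          · simp [Set.indicator, hc]
          · simp [Set.indicator, hc]
      _ ≤ η := hUIA r hr1 hrT n (le_trans hrT hTd)
  -- eventual bounds
  have hev1 : ∀ᶠ n in atTop, T ≤ d n := hd.eventually_ge_atTop T
  have hev1' : ∀ᶠ n in atTop, 1 ≤ d n := hd.eventually_ge_atTop 1
  have hev2 : ∀ᶠ n in atTop,
      |(d n : ℝ)⁻¹ * ∑ t ∈ Icc 1 (d n), ∫ ω, X n t ω ∂P - μbar| ≤ ε / 4 := by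
    have := Metric.tendsto_atTop.mp hmean_t (ε / 4) (by positivity)
    obtain ⟨N2, hN2⟩ := this
    rw [eventually_atTop]
    exact ⟨N2, fun n hn => by
      have := hN2 n hn
      rw [Real.dist_eq] at this
      exact this.le⟩
  have hev3 : ∀ᶠ n in atTop,
      2 * A ^ 2 * ((d n : ℝ)⁻¹ * ∑ τ ∈ range (d n), a n τ) ≤ (δ / 2) * (ε / 4) ^ 2 := by
    set c : ℝ := (δ / 2) * (ε / 4) ^ 2 / (2 * A ^ 2) with hc
    have hcpos : 0 < c := by positivity
    have := Metric.tendsto_atTop.mp haC c hcpos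
    obtain ⟨N3, hN3⟩ := this
    rw [eventually_atTop]
    refine ⟨N3, fun n hn => ?_⟩
    have h := hN3 n hn
    rw [Real.dist_eq, sub_zero] at h
    have h2 : (d n : ℝ)⁻¹ * ∑ τ ∈ range (d n), a n τ ≤ c := (le_abs_self _).trans h.le
    calc 2 * A ^ 2 * ((d n : ℝ)⁻¹ * ∑ τ ∈ range (d n), a n τ) ≤ 2 * A ^ 2 * c :=
          mul_le_mul_of_nonneg_left h2 (by positivity)
      _ = (δ / 2) * (ε / 4) ^ 2 := by
          rw [hc]; field_simp
  filter_upwards [hev1, hev1', hev2, hev3] with n hn1 hn1' hn2 hn3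
  have hpern := per_n P (d n) hn1' (X n) (hXm n) (fun t h1 h2 => hint n t h1 h2)
    A hA (a n) (ha0 n)
    (fun t τ h1 h2 => hcov A hA n t τ h1 h2 (trunc A) (trunc A)
      (measurable_trunc A) (measurable_trunc A)
      (fun x => abs_trunc_le A x hA.le) (fun x => abs_trunc_le A x hA.le))
    η ε μbar hε hη (le_trans (min_le_left _ _) (by linarith))
    (fun t h1 h2 => htrunc n t h1 h2 hn1) hn2
  refine hpern.trans ?_
  have hb1 : η / (ε / 4) ≤ δ / 2 := by
    rw [div_le_iff₀ (by positivity : (0:ℝ) < ε / 4)]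
    have : η ≤ δ * ε / 8 := min_le_right _ _
    linarith
  have hb2 : (2 * A ^ 2 * ((d n : ℝ)⁻¹ * ∑ τ ∈ range (d n), a n τ)) / (ε / 4) ^ 2
      ≤ δ / 2 := by
    rw [div_le_iff₀ (by positivity : (0:ℝ) < (ε / 4) ^ 2)]
    calc 2 * A ^ 2 * ((d n : ℝ)⁻¹ * ∑ τ ∈ range (d n), a n τ)
        ≤ (δ / 2) * (ε / 4) ^ 2 := hn3
      _ = δ / 2 * (ε / 4) ^ 2 := by ring
  calc ENNReal.ofReal (η / (ε / 4))
        + ENNReal.ofReal ((2 * A ^ 2 * ((d n : ℝ)⁻¹ * ∑ τ ∈ range (d n), a n τ)) / (ε / 4) ^ 2)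
      ≤ ENNReal.ofReal (δ / 2) + ENNReal.ofReal (δ / 2) :=
        add_le_add (ENNReal.ofReal_le_ofReal hb1) (ENNReal.ofReal_le_ofReal hb2)
    _ = ENNReal.ofReal δ := by
        rw [← ENNReal.ofReal_add (by positivity) (by positivity)]
        norm_num
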